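/- For every κ > 0 and every x > 0 one has g(κx) = κ^(k+3/2) g_κ(x); that is, the change of variables η ↦ κη in the defining integral of g yields the rescaled relation ρ(r) = κ^(1+2a) ρ̄_κ(s) for the mass–energy density. -/

import Mathlib

open Real MeasureTheory

lemma rpow_half_neg (x : ℝ) (hx : x < 0) : x ^ ((1:ℝ)/2) = 0 := by
  rw [Real.rpow_def_of_neg hx]
  have : (1:ℝ)/2*π = π/2 := by ring
  rw [this, Real.cos_pi_div_two, mul_zero]

lemma mul_rpow_half (b A : ℝ) (hb : 0 ≤ b) :
    (b*A) ^ ((1:ℝ)/2) = b ^ ((1:ℝ)/2) * A ^ ((1:ℝ)/2) := by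
  rcases le_or_gt 0 A with h | h
  · exact Real.mul_rpow hb h
  · rw [rpow_half_neg A h, mul_zero]
    rcases eq_or_lt_of_le hb with hb0 | hb0
    · rw [← hb0, zero_mul, Real.zero_rpow (by norm_num)]
    · exact rpow_half_neg _ (mul_neg_of_pos_of_neg hb0 h)

theorem stmt_8
    (Φ : ℝ → ℝ) (hΦmeas : Measurable Φ) (hΦnn : ∀ η, 0 ≤ Φ η)
    (hΦneg : ∀ η < (0:ℝ), Φ η = 0)
    (C k δ C' a : ℝ) (hC : 0 < C) (hk0 : 0 < k) (hk1 : k < 3/2)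
    (hδ0 : 0 < δ) (hδ1 : δ ≤ 1/2) (hC' : 0 < C') (ha : a = (k + 1/2)/2)
    (hΦtaylor : ∀ η ∈ Set.Icc (0:ℝ) 1, |Φ η - C * η ^ k| ≤ C' * η ^ (k + δ))
    (g : ℝ → ℝ)
    (hg : ∀ y > (0:ℝ), g y = 4 * π * Real.exp (3*y) *
      ∫ η in (0:ℝ)..(1 - Real.exp (-y)),
        Φ η * (1-η)^2 * (Real.exp (2*y)*(1-η)^2 - 1) ^ ((1:ℝ)/2))
    (hgneg : ∀ y ≤ (0:ℝ), g y = 0)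
    (F : ℝ → ℝ → ℝ) (G : ℝ → ℝ → ℝ → ℝ) (Φκ : ℝ → ℝ → ℝ)
    (hF : ∀ κ > (0:ℝ), ∀ x, F κ x = (Real.exp (-(κ*x)) - 1 + κ*x) / κ^2)
    (hG : ∀ κ x η, G κ x η = η^2 - F κ (2*x))
    (hΦκ : ∀ κ > (0:ℝ), ∀ η, Φκ κ η = κ ^ (-k) * Φ (κ*η))
    (gκ : ℝ → ℝ → ℝ)
    (hgκ : ∀ κ > (0:ℝ), ∀ x > (0:ℝ), gκ κ x =
      4 * π * Real.exp (4*κ*x) *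
        ∫ η in (0:ℝ)..(x - κ * F κ x),
          Φκ κ η * (1 - κ*η)^2 * (2*(x-η) + κ * G κ x η) ^ ((1:ℝ)/2))
    (hgκ0 : ∀ κ > (0:ℝ), ∀ x ≤ (0:ℝ), gκ κ x = 0) :
    ∀ κ > (0:ℝ), ∀ x > (0:ℝ), g (κ*x) = κ ^ (k + 3/2) * gκ κ x := by
  intro κ hκ x hx
  have hκ0 : κ ≠ 0 := hκ.ne'
  have hE : (0:ℝ) < Real.exp (κ*x) := Real.exp_pos _
  set b := x - κ * F κ x with hbdef
  have hb : κ * b = 1 - Real.exp (-(κ*x)) := by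
    rw [hbdef, hF κ hκ x]; field_simp; ring
  rw [hg (κ*x) (mul_pos hκ hx), hgκ κ hκ x hx]
  -- substitution in the g-integral
  have h1 := intervalIntegral.integral_comp_mul_left
    (fun η => Φ η * (1-η)^2 * (Real.exp (2*(κ*x))*(1-η)^2 - 1) ^ ((1:ℝ)/2))
    hκ0 (a := 0) (b := b)
  rw [mul_zero, hb, smul_eq_mul] at h1
  -- pointwise identity for the integrands
  have hexp2 : Real.exp (2*(κ*x)) = Real.exp (κ*x) ^ 2 := by
    rw [two_mul, Real.exp_add, sq]
  have hpt : ∀ u : ℝ,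
      Φ (κ*u) * (1-κ*u)^2 * (Real.exp (2*(κ*x))*(1-κ*u)^2 - 1) ^ ((1:ℝ)/2)
        = (Real.exp (κ*x) * κ ^ ((1:ℝ)/2)) *
          (Φ (κ*u) * (1-κ*u)^2 * (2*(x-u) + κ * G κ x u) ^ ((1:ℝ)/2)) := by
    intro u
    have hGA : Real.exp (2*(κ*x))*(1-κ*u)^2 - 1
        = (Real.exp (κ*x)^2 * κ) * (2*(x-u) + κ * G κ x u) := by
      rw [hG, hF κ hκ (2*x), hexp2]
      have hneg : Real.exp (-(κ*(2*x))) = (Real.exp (κ*x)^2)⁻¹ := by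
        rw [← hexp2, ← Real.exp_neg]
        ring_nf
      rw [hneg]
      field_simp
      ring
    rw [hGA, mul_rpow_half _ _ (by positivity),
      Real.mul_rpow (by positivity) hκ.le]
    have hsq : (Real.exp (κ*x)^2) ^ ((1:ℝ)/2) = Real.exp (κ*x) := by
      rw [← Real.rpow_natCast (Real.exp (κ*x)) 2, ← Real.rpow_mul hE.le]
      norm_num
    rw [hsq]
    ring
  have h2 : (fun u => Φ (κ*u) * (1-κ*u)^2 *
      (Real.exp (2*(κ*x))*(1-κ*u)^2 - 1) ^ ((1:ℝ)/2))
      = fun u => (Real.exp (κ*x) * κ ^ ((1:ℝ)/2)) *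
          (Φ (κ*u) * (1-κ*u)^2 * (2*(x-u) + κ * G κ x u) ^ ((1:ℝ)/2)) :=
    funext hpt
  rw [h2] at h1
  rw [intervalIntegral.integral_const_mul] at h1
  -- rewrite the gκ-integrand pulling out κ^(-k)
  have h3 : (fun η => Φκ κ η * (1-κ*η)^2 * (2*(x-η) + κ * G κ x η) ^ ((1:ℝ)/2))
      = fun η => κ ^ (-k) *
          (Φ (κ*η) * (1-κ*η)^2 * (2*(x-η) + κ * G κ x η) ^ ((1:ℝ)/2)) := by
    funext η
    rw [hΦκ κ hκ η]; ring
  rw [show (∫ η in (0:ℝ)..b, Φκ κ η * (1-κ*η)^2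
        * (2*(x-η) + κ * G κ x η) ^ ((1:ℝ)/2))
      = ∫ η in (0:ℝ)..b, κ ^ (-k) *
          (Φ (κ*η) * (1-κ*η)^2 * (2*(x-η) + κ * G κ x η) ^ ((1:ℝ)/2)) from by
        rw [h3],
    intervalIntegral.integral_const_mul]
  -- combine scalars
  set J := ∫ η in (0:ℝ)..b, Φ (κ*η) * (1-κ*η)^2
      * (2*(x-η) + κ * G κ x η) ^ ((1:ℝ)/2) with hJ
  have hI : (∫ η in (0:ℝ)..(1 - Real.exp (-(κ*x))),
      Φ η * (1-η)^2 * (Real.exp (2*(κ*x))*(1-η)^2 - 1) ^ ((1:ℝ)/2))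
      = κ * (Real.exp (κ*x) * κ ^ ((1:ℝ)/2) * J) := by
    beta_reduce at h1
    rw [h1]; exact (mul_inv_cancel_left₀ hκ0 _).symm
  rw [hI]
  have e1 : Real.exp (3*(κ*x)) * Real.exp (κ*x) = Real.exp (4*κ*x) := by
    rw [← Real.exp_add]; ring_nf
  have e2 : κ ^ (k + 3/2) * κ ^ (-k) = κ * κ ^ ((1:ℝ)/2) := by
    rw [← Real.rpow_add hκ, show k + 3/2 + -k = 1 + (1:ℝ)/2 by ring,
      Real.rpow_add hκ, Real.rpow_one]
  linear_combination (4*π*J*κ*(κ^((1:ℝ)/2)))*e1 - (4*π*Real.exp (4*κ*x)*J)*e2
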